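/- arXiv:1506.09192 — 2 statements merged into one kernel-verified Lean document; each statement's English description precedes it below -/
import Mathlib

section
/- For every invertible complex n×n matrix G there exists a complex n×n matrix X with exp(X) = G; that is, the matrix exponential is surjective onto GL(n,ℂ). -/
open NormedSpace Polynomial

/-- In a commutative finite-dimensional complex Banach algebra, every unit is an exponential. -/
theorem exp_surj_of_comm_findim {A : Type*} [NormedCommRing A] [NormedAlgebra ℂ A]
    [CompleteSpace A] [FiniteDimensional ℂ A] {u : A} (hu : IsUnit u) :
    ∃ x : A, exp x = u := by
  classical
  let +nondep : NormedAlgebra ℚ A := .restrictScalars ℚ ℂ A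
  set W : Set A := Set.range (exp : A → A) with hWdef
  have h1W : (1 : A) ∈ W := ⟨0, exp_zero⟩
  -- W is a neighborhood of 1
  have hd : HasStrictFDerivAt (exp)
      ((ContinuousLinearEquiv.refl ℂ A : A ≃L[ℂ] A) : A →L[ℂ] A) (0 : A) := by
    exact hasStrictFDerivAt_exp_zero (𝕂 := ℂ) (𝔸 := A)
  have hW1 : W ∈ nhds (1 : A) := by
    have h := hd.map_nhds_eq_of_equiv
    have hmem : W ∈ Filter.map (exp) (nhds (0 : A)) :=
      Filter.mem_map.2 (Filter.univ_mem' fun x => ⟨x, rfl⟩)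
    rw [h] at hmem
    simpa [exp_zero] using hmem
  -- W is open
  have hWopen : IsOpen W := by
    rw [isOpen_iff_mem_nhds]
    rintro _ ⟨x, rfl⟩
    have hc : Continuous fun a : A => exp (-x) * a := continuous_const.mul continuous_id
    have h2 : (fun a : A => exp (-x) * a) ⁻¹' W ∈ nhds (exp x) := by
      apply hc.continuousAt.preimage_mem_nhds
      rw [show exp (-x) * exp x = 1 by rw [← exp_add]; simp]
      exact hW1
    filter_upwards [h2] with a ha
    obtain ⟨y, hy⟩ := ha
    refine ⟨x + y, ?_⟩
    rw [exp_add, hy, ← mul_assoc,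
      show exp x * exp (-x) = 1 by rw [← exp_add]; simp, one_mul]
  -- the union of translates of W by units not in W
  set Uc : Set A := {v | IsUnit v ∧ v ∉ W} with hUcdef
  set D : Set A := ⋃ v ∈ Uc, (fun a => Ring.inverse v * a) ⁻¹' W with hDdef
  have hDopen : IsOpen D :=
    isOpen_biUnion fun v _ => hWopen.preimage (continuous_const.mul continuous_id)
  have hDW : ∀ a ∈ D, a ∉ W := by
    rintro a haD ⟨x, hx⟩
    obtain ⟨v, hv, hva⟩ := Set.mem_iUnion₂.1 haD
    obtain ⟨y, hy⟩ := hva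
    apply hv.2
    have hcan : v * (Ring.inverse v * a) = a := Ring.mul_inverse_cancel_left _ _ hv.1
    have hy' : v * exp y = exp x := by rw [hy, hcan, hx]
    refine ⟨x + -y, ?_⟩
    have hexp : exp y * exp (-y) = (1 : A) := by rw [← exp_add]; simp
    rw [exp_add]
    calc exp x * exp (-y) = v * exp y * exp (-y) := by rw [hy']
    _ = v * (exp y * exp (-y)) := by ring
    _ = v := by rw [hexp, mul_one]
  have hUcD : Uc ⊆ D := by
    intro v hv
    refine Set.mem_biUnion hv ?_
    show Ring.inverse v * v ∈ W
    rw [Ring.inverse_mul_cancel _ hv.1]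
    exact h1W
  -- the determinant polynomial
  set f : A →ₗ[ℂ] A := LinearMap.mulLeft ℂ (u - 1) with hfdef
  have hmulLeft : ∀ z : ℂ, LinearMap.mulLeft ℂ (1 + z • (u - 1)) = LinearMap.id + z • f := by
    intro z
    ext a
    simp [hfdef, LinearMap.mulLeft_apply, add_mul, smul_mul_assoc]
  set bb := Module.finBasis ℂ A with hbbdef
  set B := LinearMap.toMatrix bb bb f with hBdef
  set p : ℂ[X] := Matrix.det (1 + (X : ℂ[X]) • B.map C) with hpdef
  have heval : ∀ z : ℂ, p.eval z = LinearMap.det (LinearMap.id + z • f) := by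
    intro z
    have h1 : p.eval z = ((1 + (X : ℂ[X]) • B.map C).map (evalRingHom z)).det := by
      rw [hpdef]; exact RingHom.map_det (evalRingHom z) _
    have h2 : (1 + (X : ℂ[X]) • B.map C).map (evalRingHom z) = 1 + z • B := by
      ext i j
      simp [Matrix.map_apply, Matrix.add_apply, Matrix.smul_apply, Matrix.one_apply, apply_ite, mul_comm z]
    have h3 : (1 : Matrix _ _ ℂ) + z • B = LinearMap.toMatrix bb bb (LinearMap.id + z • f) := by
      rw [map_add, map_smul, LinearMap.toMatrix_id, hBdef]
    rw [h1, h2, h3, ← LinearMap.det_toMatrix bb]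
  have hp0 : p.eval 0 = 1 := by
    rw [heval 0]
    simp [LinearMap.det_id]
  have hp : p ≠ 0 := fun h => by simp [h] at hp0
  have hp1 : p.eval 1 ≠ 0 := by
    rw [heval 1]
    have he : LinearMap.id + (1 : ℂ) • f = LinearMap.mulLeft ℂ u := by
      rw [← hmulLeft 1]; norm_num
    rw [he]
    set e : A ≃ₗ[ℂ] A := LinearEquiv.ofLinear (LinearMap.mulLeft ℂ u)
      (LinearMap.mulLeft ℂ ((hu.unit⁻¹ : Aˣ) : A))
      (by ext a
          simp only [LinearMap.coe_comp, Function.comp_apply, LinearMap.mulLeft_apply,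
            LinearMap.id_coe, id_eq]
          rw [← mul_assoc, hu.mul_val_inv, one_mul])
      (by ext a
          simp only [LinearMap.coe_comp, Function.comp_apply, LinearMap.mulLeft_apply,
            LinearMap.id_coe, id_eq]
          rw [← mul_assoc, hu.val_inv_mul, one_mul]) with hedef
    have hdet : IsUnit (LinearMap.det (e : A →ₗ[ℂ] A)) := LinearEquiv.isUnit_det' e
    have hee : (e : A →ₗ[ℂ] A) = LinearMap.mulLeft ℂ u := rfl
    rw [hee] at hdet
    exact hdet.ne_zero
  -- units along the path
  have hunit : ∀ z : ℂ, p.eval z ≠ 0 → IsUnit (1 + z • (u - 1)) := by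
    intro z hz
    rw [heval z] at hz
    have hdet : IsUnit ((LinearMap.toMatrix bb bb) (LinearMap.id + z • f)).det := by
      rw [LinearMap.det_toMatrix]
      exact isUnit_iff_ne_zero.2 hz
    set e := LinearEquiv.ofIsUnitDet hdet with hedef
    have h1 : (LinearMap.id + z • f : A →ₗ[ℂ] A) (e.symm 1) = 1 := by
      rw [← LinearEquiv.ofIsUnitDet_apply hdet, ← hedef, e.apply_symm_apply]
    have h2 : (1 + z • (u - 1)) * e.symm 1 = 1 := by
      have h3 := congrArg (fun L : A →ₗ[ℂ] A => L (e.symm 1)) (hmulLeft z)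
      simp only [LinearMap.mulLeft_apply] at h3
      rw [h3, h1]
    exact IsUnit.of_mul_eq_one _ h2
  -- path from 1 to u through units
  set S : Set ℂ := {z | p.IsRoot z} with hSdef
  have hSfin : S.Finite := p.finite_setOf_isRoot hp
  have hpc : IsPathConnected Sᶜ :=
    hSfin.countable.isPathConnected_compl_of_one_lt_rank
      (by rw [Complex.rank_real_complex]; norm_num)
  have h0S : (0 : ℂ) ∈ Sᶜ := by simp [hSdef, Polynomial.IsRoot, hp0]
  have h1S : (1 : ℂ) ∈ Sᶜ := by simp [hSdef, Polynomial.IsRoot, hp1]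
  obtain ⟨ρ, hρ⟩ := hpc.joinedIn 0 h0S 1 h1S
  set γ : unitInterval → A := fun t => 1 + (ρ t) • (u - 1) with hγdef
  have hγcont : Continuous γ :=
    continuous_const.add (ρ.continuous.smul continuous_const)
  have hγunit : ∀ t, IsUnit (γ t) := fun t => hunit (ρ t) (hρ t)
  set O₁ : Set unitInterval := γ ⁻¹' W with hO₁def
  have hO₁open : IsOpen O₁ := hWopen.preimage hγcont
  have hcompl : O₁ᶜ = γ ⁻¹' D := by
    ext t
    constructor
    · intro ht
      exact hUcD ⟨hγunit t, ht⟩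
    · intro ht hW
      exact hDW _ ht hW
  have hclopen : IsClopen O₁ :=
    ⟨isOpen_compl_iff.1 (hcompl ▸ hDopen.preimage hγcont), hO₁open⟩
  have hne : (0 : unitInterval) ∈ O₁ := by
    show γ 0 ∈ W
    rw [hγdef]
    simp only [ρ.source, zero_smul, add_zero]
    exact h1W
  have huniv : O₁ = Set.univ := hclopen.eq_univ ⟨0, hne⟩
  have h1mem : (1 : unitInterval) ∈ O₁ := huniv ▸ Set.mem_univ _
  obtain ⟨x, hx⟩ := h1mem
  refine ⟨x, ?_⟩
  rw [hx, hγdef]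
  simp [ρ.target]


set_option maxHeartbeats 1000000 in
set_option synthInstance.maxHeartbeats 400000 in
theorem matrix_exp_surjective_onto_GL (n : ℕ) (G : Matrix (Fin n) (Fin n) ℂ)
    (hG : IsUnit G) : ∃ X : Matrix (Fin n) (Fin n) ℂ, NormedSpace.exp X = G := by
  letI : SeminormedRing (Matrix (Fin n) (Fin n) ℂ) := Matrix.linftyOpSemiNormedRing
  letI : NormedRing (Matrix (Fin n) (Fin n) ℂ) := Matrix.linftyOpNormedRing
  letI : NormedAlgebra ℂ (Matrix (Fin n) (Fin n) ℂ) := Matrix.linftyOpNormedAlgebra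
  set A : Subalgebra ℂ (Matrix (Fin n) (Fin n) ℂ) := Algebra.adjoin ℂ {G} with hAdef
  letI : CommRing A := Algebra.adjoinCommRingOfComm ℂ (by
    rintro a ha b hb
    rw [Set.mem_singleton_iff] at ha hb
    rw [ha, hb])
  letI : NormedCommRing A := { (inferInstance : NormedRing A) with mul_comm := mul_comm }
  haveI : FiniteDimensional ℂ A := inferInstance
  set g : A := ⟨G, Algebra.self_mem_adjoin_singleton ℂ G⟩ with hgdef
  have hinj : Function.Injective (LinearMap.mulLeft ℂ g : A →ₗ[ℂ] A) := by
    intro a b hab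
    simp only [LinearMap.mulLeft_apply] at hab
    obtain ⟨U, hU⟩ := hG
    apply Subtype.ext
    have h : G * (a : Matrix (Fin n) (Fin n) ℂ) = G * (b : Matrix (Fin n) (Fin n) ℂ) :=
      congrArg Subtype.val hab
    have h2 : (↑U⁻¹ : Matrix (Fin n) (Fin n) ℂ) * (G * (a : Matrix (Fin n) (Fin n) ℂ)) =
        (↑U⁻¹ : Matrix (Fin n) (Fin n) ℂ) * (G * (b : Matrix (Fin n) (Fin n) ℂ)) := by rw [h]
    rwa [← hU, ← mul_assoc, ← mul_assoc, U.inv_mul, one_mul, one_mul] at h2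
  obtain ⟨y, hy⟩ := LinearMap.surjective_of_injective hinj 1
  simp only [LinearMap.mulLeft_apply] at hy
  have hgu : IsUnit g := IsUnit.of_mul_eq_one _ hy
  obtain ⟨x, hx⟩ := exp_surj_of_comm_findim hgu
  let +nondep : NormedAlgebra ℚ A := .restrictScalars ℚ ℂ A
  have hmap := NormedSpace.map_exp (A.val) continuous_subtype_val x
  have hfin : NormedSpace.exp ((x : Matrix (Fin n) (Fin n) ℂ)) = G :=
    calc NormedSpace.exp ((x : Matrix (Fin n) (Fin n) ℂ))
        = NormedSpace.exp (A.val x) := rfl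
      _ = A.val _ := hmap.symm
      _ = G := by rw [hx]; rfl
  exact ⟨x, hfin⟩
end

section
/- If X and Y are complex n×n matrices with exp(X) = exp(Y) = G and both X and Y commute with G, and all eigenvalues of X and of Y have real part in the half-open interval [0,1) after dividing by 2πi (i.e., X = 2πi·L with eigenvalues of L having real part in [0,1), similarly for Y), then X and Y are conjugate by an invertible matrix commuting with G. (Special case: if moreover G is diagonalizable, then X = Y whenever X and Y are simultaneously diagonalizable with G's eigenbasis.) -/
open Complex

set_option synthInstance.maxHeartbeats 1000000
set_option maxHeartbeats 4000000

section LogUniqueAux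

private lemma indep_comp_zero {ι N : Type*} [AddCommGroup N] [Module ℂ N]
    {p : ι → Submodule ℂ N} (h : iSupIndep p) (c : ι →₀ N) (hc : ∀ i, c i ∈ p i)
    (hsum : (c.sum fun _ x => x) = 0) (i : ι) : c i = 0 := by
  classical
  by_cases hi : i ∈ c.support
  · have hs : c i + ∑ j ∈ c.support.erase i, c j = 0 := by
      rw [Finset.add_sum_erase _ _ hi]
      exact hsum
    have h1 : c i = - ∑ j ∈ c.support.erase i, c j := eq_neg_of_add_eq_zero_left hs
    have hmem : (- ∑ j ∈ c.support.erase i, c j) ∈ ⨆ (j) (_ : j ≠ i), p j := by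
      refine neg_mem (Submodule.sum_mem _ fun j hj => ?_)
      exact Submodule.mem_iSup_of_mem j
        (Submodule.mem_iSup_of_mem (Finset.ne_of_mem_erase hj) (hc j))
    exact (Submodule.disjoint_def.mp (h i)) (c i) (hc i) (h1 ▸ hmem)
  · simpa using Finsupp.notMem_support_iff.mp hi

private lemma exp_apply_of_pow_eq_zero {V : Type} [NormedAddCommGroup V] [NormedSpace ℂ V]
    [CompleteSpace V] (N : V →L[ℂ] V) (m : ℕ) (w : V)
    (h : (N ^ m) w = 0) :
    NormedSpace.exp N w = ∑ k ∈ Finset.range m, (k.factorial : ℂ)⁻¹ • (N ^ k) w := by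
  have hsum : Summable fun k : ℕ => (k.factorial : ℂ)⁻¹ • N ^ k :=
    NormedSpace.expSeries_summable' (𝕂 := ℂ) N
  have h1 : NormedSpace.exp N w = ∑' k : ℕ, ((k.factorial : ℂ)⁻¹ • N ^ k) w := by
    rw [NormedSpace.exp_eq_tsum ℂ]
    exact ContinuousLinearMap.map_tsum (ContinuousLinearMap.apply ℂ V w) hsum
  rw [h1, tsum_eq_sum (s := Finset.range m) ?_]
  · rfl
  · intro k hk
    rw [Finset.mem_range, not_lt] at hk
    have hNk : N ^ k = N ^ (k - m) * N ^ m := by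
      rw [← pow_add]; congr 1; omega
    simp [hNk, ContinuousLinearMap.smul_apply, ContinuousLinearMap.mul_apply, h]

private lemma component_lemma {V : Type} [NormedAddCommGroup V] [NormedSpace ℂ V]
    [CompleteSpace V] (f : V →L[ℂ] V) (μ : ℂ) :
    ∀ (m : ℕ) (w : V), ((f - μ • 1) ^ m) w = 0 → NormedSpace.exp f w = w →
      f w = μ • w ∧ (Complex.exp μ ≠ 1 → w = 0) := by
  letI : NormedAlgebra ℚ (V →L[ℂ] V) := NormedAlgebra.restrictScalars ℚ ℂ _
  intro m
  induction m with
  | zero =>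
    intro w h _
    rw [pow_zero, ContinuousLinearMap.one_apply] at h
    subst h
    simp
  | succ m ih =>
    intro w h1 h2
    set N : V →L[ℂ] V := f - μ • 1 with hNdef
    have hfN : Commute f N := by
      refine (Commute.refl f).sub_right ?_
      exact ((Commute.one_right f).smul_right μ)
    have hcommN : Commute (NormedSpace.exp f) N := hfN.exp_left
    have h2' : NormedSpace.exp f (N w) = N w := by
      have : (NormedSpace.exp f * N) w = (N * NormedSpace.exp f) w := by
        rw [hcommN.eq]
      rw [ContinuousLinearMap.mul_apply, ContinuousLinearMap.mul_apply, h2] at this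
      exact this
    have h1' : (N ^ m) (N w) = 0 := by
      rw [← ContinuousLinearMap.mul_apply, ← pow_succ]
      exact h1
    obtain ⟨hNN, _⟩ := ih (N w) h1' h2'
    have hNa : ∀ u, N u = f u - μ • u := fun u => by
      simp [hNdef, ContinuousLinearMap.sub_apply, ContinuousLinearMap.smul_apply,
        ContinuousLinearMap.one_apply]
    have hNNw : N (N w) = 0 := by
      rw [hNa, hNN, sub_self]
    have hN2 : (N ^ 2) w = 0 := by
      rw [pow_two, ContinuousLinearMap.mul_apply]
      exact hNNw
    have hexpN : NormedSpace.exp N w = w + N w := by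
      rw [exp_apply_of_pow_eq_zero N 2 w hN2]
      simp [Finset.sum_range_succ]
    have hexpmu : NormedSpace.exp (μ • (1 : V →L[ℂ] V)) = Complex.exp μ • 1 := by
      have halg : (μ • (1 : V →L[ℂ] V)) = algebraMap ℂ (V →L[ℂ] V) μ :=
        (Algebra.algebraMap_eq_smul_one μ).symm
      rw [halg, ← NormedSpace.map_exp (algebraMap ℂ (V →L[ℂ] V)) (continuous_algebraMap ℂ _)]
      rw [← Complex.exp_eq_exp_ℂ, Algebra.algebraMap_eq_smul_one]
    have hsplit : NormedSpace.exp f = Complex.exp μ • NormedSpace.exp N := by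
      have hf : f = μ • (1 : V →L[ℂ] V) + N := by rw [hNdef]; abel
      rw [hf, NormedSpace.exp_add_of_commute (((Commute.one_left N).smul_left μ))]
      rw [hexpmu, smul_mul_assoc, one_mul]
    have key : w = Complex.exp μ • (w + N w) := by
      conv_lhs => rw [← h2]
      rw [hsplit]
      simp only [ContinuousLinearMap.smul_apply]
      rw [hexpN]
    by_cases he : Complex.exp μ = 1
    · have hw : N w = 0 := by
        have hk := key
        rw [he, one_smul] at hk
        exact (left_eq_add.mp hk)
      refine ⟨?_, fun hne => absurd he hne⟩
      rw [hNa] at hw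
      exact sub_eq_zero.mp hw
    · have hne : (1 - Complex.exp μ) ≠ 0 := sub_ne_zero.mpr fun hh => he hh.symm
      have hkey2 : N w = Complex.exp μ • N w := by
        have hk := congrArg N key
        rw [map_smul, map_add, hNNw, add_zero] at hk
        exact hk
      have hNw : N w = 0 := by
        have h0 : (1 - Complex.exp μ) • N w = 0 := by
          rw [sub_smul, one_smul]
          exact sub_eq_zero.mpr hkey2
        exact (smul_eq_zero.mp h0).resolve_left hne
      constructor
      · rw [hNa] at hNw
        exact sub_eq_zero.mp hNw
      · intro _
        have hw : w = Complex.exp μ • w := by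
          calc w = Complex.exp μ • (w + N w) := key
          _ = Complex.exp μ • w := by rw [hNw, add_zero]
        have h0 : (1 - Complex.exp μ) • w = 0 := by
          rw [sub_smul, one_smul]
          exact sub_eq_zero.mpr hw
        exact (smul_eq_zero.mp h0).resolve_left hne

private lemma core {V : Type} [NormedAddCommGroup V] [NormedSpace ℂ V] [FiniteDimensional ℂ V]
    (f : V →L[ℂ] V)
    (hspec : ∀ (α : ℂ) (w : V), w ≠ 0 → f w = α • w → Complex.exp α = 1 → α = 0)
    (v : V) (hv : NormedSpace.exp f v = v) : f v = 0 := by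
  classical
  set F : Module.End ℂ V := (f : V →ₗ[ℂ] V) with hF
  have hpow : ∀ (μ : ℂ) (k : ℕ) (w : V),
      ((F - μ • 1) ^ k) w = ((f - μ • 1) ^ k) w := by
    intro μ k
    have hcoe : (F - μ • 1 : Module.End ℂ V) = ((f - μ • 1 : V →L[ℂ] V) : V →ₗ[ℂ] V) := by
      ext z
      simp [hF]
    intro w
    revert w
    induction k with
    | zero => intro w; simp
    | succ k ihk =>
      intro w
      rw [pow_succ, pow_succ, Module.End.mul_apply, ContinuousLinearMap.mul_apply, ihk]
      congr 1
  have hT : ⨆ μ : ℂ, F.maxGenEigenspace μ = ⊤ := Module.End.iSup_maxGenEigenspace_eq_top F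
  have hmem : v ∈ ⨆ μ : ℂ, F.maxGenEigenspace μ := hT ▸ Submodule.mem_top
  rw [Submodule.mem_iSup_iff_exists_finsupp] at hmem
  obtain ⟨c, hc, hcsum⟩ := hmem
  have hindep := Module.End.independent_maxGenEigenspace F
  set E : V →L[ℂ] V := NormedSpace.exp f - 1 with hE
  have hEv : E v = 0 := by simp [hE, ContinuousLinearMap.sub_apply, hv]
  have hcommE : ∀ (μ : ℂ) (k : ℕ),
      ((f - μ • 1) ^ k) * E = E * ((f - μ • 1) ^ k) := by
    intro μ k
    have h1 : Commute f E := by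
      exact ((Commute.refl f).exp_right).sub_right (Commute.one_right f)
    have h2 : Commute (f - μ • 1) E := h1.sub_left ((Commute.one_left E).smul_left μ)
    exact (h2.pow_left k).eq
  have hmapsto : ∀ μ (w : V), w ∈ F.maxGenEigenspace μ → E w ∈ F.maxGenEigenspace μ := by
    intro μ w hw
    rw [Module.End.mem_maxGenEigenspace] at hw ⊢
    obtain ⟨k, hk⟩ := hw
    refine ⟨k, ?_⟩
    rw [hpow] at hk ⊢
    have := congrArg (fun z => E z) hk
    simp only [map_zero] at this
    rw [← ContinuousLinearMap.mul_apply, ← hcommE μ k, ContinuousLinearMap.mul_apply] at this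
    exact this
  have hcomp : ∀ μ : ℂ, E (c μ) = 0 := by
    intro μ
    set c' : ℂ →₀ V := c.mapRange (fun w => E w) (map_zero E) with hc'
    have hc'mem : ∀ i, c' i ∈ F.maxGenEigenspace i := by
      intro i
      simp only [hc', Finsupp.mapRange_apply]
      exact hmapsto i (c i) (hc i)
    have hsum' : (c'.sum fun _ x => x) = 0 := by
      rw [hc', Finsupp.sum_mapRange_index (by simp)]
      have : (c.sum fun _ x => E x) = E (c.sum fun _ x => x) := by
        rw [map_finsuppSum]
      rw [this, hcsum, hEv]
    have := indep_comp_zero hindep c' hc'mem hsum' μ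
    simpa [hc', Finsupp.mapRange_apply] using this
  have hfc : ∀ μ : ℂ, f (c μ) = 0 := by
    intro μ
    by_cases h0 : c μ = 0
    · rw [h0, map_zero]
    · have hexp : NormedSpace.exp f (c μ) = c μ := by
        have := hcomp μ
        rw [hE, ContinuousLinearMap.sub_apply, ContinuousLinearMap.one_apply,
          sub_eq_zero] at this
        exact this
      obtain ⟨k, hk⟩ := (Module.End.mem_maxGenEigenspace F μ (c μ)).mp (hc μ)
      rw [hpow] at hk
      obtain ⟨heig, hz⟩ := component_lemma f μ k (c μ) hk hexp
      have hμ1 : Complex.exp μ = 1 := by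
        by_contra hne
        exact h0 (hz hne)
      have hμ0 : μ = 0 := hspec μ (c μ) h0 heig hμ1
      exact heig.trans (by rw [hμ0, zero_smul])
  have hfv : f v = f (c.sum fun _ x => x) := by rw [hcsum]
  rw [hfv, map_finsuppSum]
  exact Finset.sum_eq_zero fun μ _ => hfc μ

private lemma mem_spectrum_of_mul_left {A : Type*} [Ring A] [Algebra ℂ A]
    {y M : A} {β : ℂ} (hM : M ≠ 0) (h : y * M = β • M) : β ∈ spectrum ℂ y := by
  rw [spectrum.mem_iff]
  intro hu
  apply hM
  have h0 : (algebraMap ℂ A β - y) * M = 0 := by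
    rw [sub_mul, h, Algebra.algebraMap_eq_smul_one, smul_mul_assoc, one_mul, sub_self]
  obtain ⟨u, hu'⟩ := hu
  calc M = 1 * M := (one_mul M).symm
    _ = (↑u⁻¹ * ↑u) * M := by rw [u.inv_mul]
    _ = ↑u⁻¹ * ((algebraMap ℂ A β - y) * M) := by rw [mul_assoc, hu']
    _ = 0 := by rw [h0, mul_zero]

private lemma mem_spectrum_of_mul_right {A : Type*} [Ring A] [Algebra ℂ A]
    {y M : A} {β : ℂ} (hM : M ≠ 0) (h : M * y = β • M) : β ∈ spectrum ℂ y := by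
  rw [spectrum.mem_iff]
  intro hu
  apply hM
  have h0 : M * (algebraMap ℂ A β - y) = 0 := by
    rw [mul_sub, h, Algebra.algebraMap_eq_smul_one, mul_smul_comm, mul_one, sub_self]
  obtain ⟨u, hu'⟩ := hu
  calc M = M * 1 := (mul_one M).symm
    _ = M * (↑u * ↑u⁻¹) := by rw [u.mul_inv]
    _ = (M * (algebraMap ℂ A β - y)) * ↑u⁻¹ := by rw [hu', mul_assoc]
    _ = 0 := by rw [h0, zero_mul]

private lemma mem_spectrum_of_eigvec {V : Type*} [NormedAddCommGroup V] [NormedSpace ℂ V]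
    {f : V →L[ℂ] V} {β : ℂ} {w : V} (hw : w ≠ 0) (h : f w = β • w) :
    β ∈ spectrum ℂ f := by
  rw [spectrum.mem_iff]
  intro hu
  apply hw
  have h0 : (algebraMap ℂ (V →L[ℂ] V) β - f) w = 0 := by
    simp [Algebra.algebraMap_eq_smul_one, ContinuousLinearMap.sub_apply,
      ContinuousLinearMap.smul_apply, ContinuousLinearMap.one_apply, h]
  obtain ⟨u, hu'⟩ := hu
  calc w = ((1 : V →L[ℂ] V)) w := rfl
    _ = ((↑u⁻¹ * ↑u : V →L[ℂ] V)) w := by rw [u.inv_mul]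
    _ = (↑u⁻¹ : V →L[ℂ] V) ((algebraMap ℂ (V →L[ℂ] V) β - f) w) := by
        rw [ContinuousLinearMap.mul_apply, hu']
    _ = 0 := by rw [h0, map_zero]

private lemma exists_common_eigvec {V : Type*} [AddCommGroup V] [Module ℂ V]
    [FiniteDimensional ℂ V]
    (P Q : Module.End ℂ V) (hcomm : P * Q = Q * P) (α : ℂ) (v : V) (hv : v ≠ 0)
    (hPv : P v = α • v) :
    ∃ (β : ℂ) (w : V), w ≠ 0 ∧ P w = α • w ∧ Q w = β • w := by
  set W := Module.End.eigenspace P α with hW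
  have hvW : v ∈ W := Module.End.mem_eigenspace_iff.mpr hPv
  have hmap : ∀ w ∈ W, Q w ∈ W := by
    intro w hw
    rw [hW, Module.End.mem_eigenspace_iff] at hw ⊢
    have h1 : P (Q w) = Q (P w) := by
      have := congrArg (fun z => z w) hcomm
      simpa [Module.End.mul_apply] using this
    rw [h1, hw, map_smul]
  haveI : Nontrivial W := Submodule.nontrivial_iff_ne_bot.mpr
    (Submodule.ne_bot_iff W |>.mpr ⟨v, hvW, hv⟩)
  obtain ⟨β, hβ⟩ := Module.End.exists_eigenvalue (Q.restrict hmap)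
  obtain ⟨w, hwmem, hwne⟩ := hβ.exists_hasEigenvector
  refine ⟨β, ↑w, ?_, ?_, ?_⟩
  · simpa using hwne
  · exact Module.End.mem_eigenspace_iff.mp w.2
  · have := congrArg (Subtype.val) (Module.End.mem_eigenspace_iff.mp hwmem)
    simpa [LinearMap.restrict_apply] using this

noncomputable def endCLMEquiv (V : Type) [NormedAddCommGroup V] [NormedSpace ℂ V]
    [FiniteDimensional ℂ V] : Module.End ℂ V ≃ₐ[ℂ] (V →L[ℂ] V) :=
  AlgEquiv.ofLinearEquiv LinearMap.toContinuousLinearMap rfl (fun _ _ => rfl)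

noncomputable def matCLM (n : ℕ) :
    Matrix (Fin n) (Fin n) ℂ ≃ₐ[ℂ] ((Fin n → ℂ) →L[ℂ] (Fin n → ℂ)) :=
  (Matrix.toLinAlgEquiv' : Matrix (Fin n) (Fin n) ℂ ≃ₐ[ℂ] _).trans (endCLMEquiv (Fin n → ℂ))

lemma matCLM_exp (n : ℕ) (M : Matrix (Fin n) (Fin n) ℂ) :
    matCLM n (NormedSpace.exp M) = NormedSpace.exp (matCLM n M) := by
  letI : SeminormedRing (Matrix (Fin n) (Fin n) ℂ) := Matrix.linftyOpSemiNormedRing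
  letI : NormedRing (Matrix (Fin n) (Fin n) ℂ) := Matrix.linftyOpNormedRing
  letI : NormedAlgebra ℂ (Matrix (Fin n) (Fin n) ℂ) := Matrix.linftyOpNormedAlgebra
  letI : NormedAlgebra ℚ (Matrix (Fin n) (Fin n) ℂ) := NormedAlgebra.restrictScalars ℚ ℂ _
  have hcont : Continuous (matCLM n) :=
    LinearMap.continuous_of_finiteDimensional ((matCLM n).toLinearMap)
  exact NormedSpace.map_exp (matCLM n).toAlgHom hcont M

noncomputable def lmulCLM (A : Type) [NormedRing A] [NormedAlgebra ℂ A] :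
    A →ₐ[ℂ] (A →L[ℂ] A) where
  toFun a := ContinuousLinearMap.mul ℂ A a
  map_one' := by ext b; simp
  map_mul' a b := by ext c; simp [mul_assoc]
  map_zero' := by ext b; simp
  map_add' a b := by ext c; simp [add_mul]
  commutes' c := by
    ext b
    simp [Algebra.algebraMap_eq_smul_one, smul_mul_assoc]

noncomputable def rmulCLM (A : Type) [NormedRing A] [NormedAlgebra ℂ A] :
    Aᵐᵒᵖ →ₐ[ℂ] (A →L[ℂ] A) where
  toFun a := (ContinuousLinearMap.mul ℂ A).flip a.unop
  map_one' := by ext b; simp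
  map_mul' a b := by ext c; simp [mul_assoc]
  map_zero' := by ext b; simp
  map_add' a b := by ext c; simp [mul_add]
  commutes' c := by
    ext b
    simp [Algebra.algebraMap_eq_smul_one, mul_smul_comm]

private lemma key_arith {α b₁ b₂ : ℂ} (hb₁ : b₁.re ∈ Set.Ico (0:ℝ) 1)
    (hb₂ : b₂.re ∈ Set.Ico (0:ℝ) 1)
    (hα : α = (2 * Real.pi * I) * (b₁ - b₂)) (hexp : Complex.exp α = 1) : α = 0 := by
  obtain ⟨k, hk⟩ := Complex.exp_eq_one_iff.mp hexp
  have hc : ((2 * Real.pi * I : ℂ)) ≠ 0 := by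
    simp [Real.pi_ne_zero, I_ne_zero, two_ne_zero]
  have hb : b₁ - b₂ = (k : ℂ) := by
    have h1 : (2 * Real.pi * I : ℂ) * (b₁ - b₂) = (2 * Real.pi * I : ℂ) * (k : ℂ) := by
      rw [← hα, hk]; ring
    exact mul_left_cancel₀ hc h1
  have hre : b₁.re - b₂.re = (k : ℝ) := by
    have := congrArg Complex.re hb
    simpa using this
  have hk0 : k = 0 := by
    obtain ⟨h1, h2⟩ := hb₁
    obtain ⟨h3, h4⟩ := hb₂
    have hlt : (k : ℝ) < 1 := by rw [← hre]; linarith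
    have hgt : (-1 : ℝ) < (k : ℝ) := by rw [← hre]; linarith
    have hlt' : k < 1 := by exact_mod_cast hlt
    have hgt' : -1 < k := by exact_mod_cast hgt
    omega
  rw [hα, hb, hk0]
  simp


private lemma commute_of_commute_exp {A : Type} [NormedRing A] [NormedAlgebra ℂ A]
    [CompleteSpace A] [FiniteDimensional ℂ A] (x y : A)
    (hxg : x * NormedSpace.exp y = NormedSpace.exp y * x)
    (hkey : ∀ β γ : ℂ, β ∈ spectrum ℂ y → γ ∈ spectrum ℂ y →
      Complex.exp (β - γ) = 1 → β = γ) :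
    x * y = y * x := by
  letI : NormedAlgebra ℚ A := NormedAlgebra.restrictScalars ℚ ℂ A
  letI : NormedAlgebra ℚ (A →L[ℂ] A) := NormedAlgebra.restrictScalars ℚ ℂ _
  have hgy : NormedSpace.exp y * NormedSpace.exp (-y) = 1 := by
    rw [← NormedSpace.exp_add_of_commute ((Commute.refl y).neg_right), add_neg_cancel,
      NormedSpace.exp_zero]
  have hyg' : NormedSpace.exp (-y) * NormedSpace.exp y = 1 := by
    rw [← NormedSpace.exp_add_of_commute ((Commute.refl y).neg_left), neg_add_cancel,
      NormedSpace.exp_zero]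
  set L := lmulCLM A with hLdef
  set R := rmulCLM A with hRdef
  have hLy : ∀ a b : A, L a b = a * b := fun a b => rfl
  have hRy : ∀ a b : A, R (MulOpposite.op a) b = b * a := fun a b => rfl
  set ad := L y - R (MulOpposite.op y) with haddef
  have hadapp : ∀ a, ad a = y * a - a * y := by
    intro a
    rw [haddef, ContinuousLinearMap.sub_apply, hLy, hRy]
  have hcommLR : Commute (L y) (R (MulOpposite.op y)) := by
    apply ContinuousLinearMap.ext
    intro a
    rw [ContinuousLinearMap.mul_apply, ContinuousLinearMap.mul_apply, hLy, hRy, hRy, hLy,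
      mul_assoc]
  have hcontL : Continuous L := LinearMap.continuous_of_finiteDimensional L.toLinearMap
  have hcontR : Continuous R := LinearMap.continuous_of_finiteDimensional R.toLinearMap
  have hexpL : NormedSpace.exp (L y) = L (NormedSpace.exp y) :=
    (NormedSpace.map_exp L hcontL y).symm
  have hexpR : NormedSpace.exp (R (MulOpposite.op (-y)))
      = R (MulOpposite.op (NormedSpace.exp (-y))) := by
    rw [← NormedSpace.exp_op]
    exact (NormedSpace.map_exp R hcontR _).symm
  have hadsplit : NormedSpace.exp ad
      = L (NormedSpace.exp y) * R (MulOpposite.op (NormedSpace.exp (-y))) := by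
    have h1 : ad = L y + R (MulOpposite.op (-y)) := by
      rw [haddef, sub_eq_add_neg]
      congr 1
      rw [MulOpposite.op_neg, map_neg]
    have hcomm2 : Commute (L y) (R (MulOpposite.op (-y))) := by
      have : R (MulOpposite.op (-y)) = - R (MulOpposite.op y) := by
        rw [MulOpposite.op_neg, map_neg]
      rw [this]
      exact hcommLR.neg_right
    rw [h1, NormedSpace.exp_add_of_commute hcomm2, hexpL, hexpR]
  have hxgneg : x * NormedSpace.exp (-y) = NormedSpace.exp (-y) * x := by
    calc x * NormedSpace.exp (-y)
        = (NormedSpace.exp (-y) * NormedSpace.exp y) * (x * NormedSpace.exp (-y)) := by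
          rw [hyg', one_mul]
      _ = NormedSpace.exp (-y) * (NormedSpace.exp y * (x * NormedSpace.exp (-y))) := by
          rw [mul_assoc]
      _ = NormedSpace.exp (-y) * ((NormedSpace.exp y * x) * NormedSpace.exp (-y)) := by
          rw [← mul_assoc (NormedSpace.exp y) x (NormedSpace.exp (-y))]
      _ = NormedSpace.exp (-y) * ((x * NormedSpace.exp y) * NormedSpace.exp (-y)) := by
          rw [hxg]
      _ = NormedSpace.exp (-y) * (x * (NormedSpace.exp y * NormedSpace.exp (-y))) := by
          rw [mul_assoc x (NormedSpace.exp y) (NormedSpace.exp (-y))]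
      _ = NormedSpace.exp (-y) * x := by rw [hgy, mul_one]
  have hexpadx : NormedSpace.exp ad x = x := by
    rw [hadsplit, ContinuousLinearMap.mul_apply, hRy, hLy, hxgneg, ← mul_assoc, hgy, one_mul]
  have hspec_ad : ∀ (α : ℂ) (M : A), M ≠ 0 →
      ad M = α • M → Complex.exp α = 1 → α = 0 := by
    intro α M hM0 hadM hexpα
    have hc' : ad * (L y) = (L y) * ad := by
      rw [haddef, sub_mul, mul_sub, hcommLR.eq]
    have hcommEnd : (↑ad : Module.End ℂ A) * (↑(L y) : Module.End ℂ A)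
        = ↑(L y) * ↑ad := by
      apply LinearMap.ext
      intro a
      have := congrArg (fun z => z a) hc'
      simpa [Module.End.mul_apply, ContinuousLinearMap.mul_apply] using this
    obtain ⟨β, M', hM'0, hadM', hLM'⟩ :=
      exists_common_eigvec (↑ad) (↑(L y)) hcommEnd α M hM0 (by simpa using hadM)
    have h1 : y * M' = β • M' := by
      have : L y M' = β • M' := by simpa using hLM'
      rw [hLy] at this
      exact this
    have h2 : y * M' - M' * y = α • M' := by
      have : ad M' = α • M' := by simpa using hadM'
      rw [hadapp] at this
      exact this
    have h3 : M' * y = (β - α) • M' := by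
      rw [h1] at h2
      have h4 : β • M' = α • M' + M' * y := sub_eq_iff_eq_add.mp h2
      rw [sub_smul, h4]
      abel
    have hβ : β ∈ spectrum ℂ y := mem_spectrum_of_mul_left hM'0 h1
    have hβα : (β - α) ∈ spectrum ℂ y := mem_spectrum_of_mul_right hM'0 h3
    have := hkey β (β - α) hβ hβα (by
      rw [show β - (β - α) = α by ring]
      exact hexpα)
    have h5 : β - (β - α) = 0 := by rw [← this]; ring
    rw [show β - (β - α) = α by ring] at h5
    exact h5
  have h0 := core ad hspec_ad x hexpadx
  have h0' : y * x - x * y = 0 := by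
    rw [← hadapp]; exact h0
  exact (sub_eq_zero.mp h0').symm

private lemma eq_of_exp_eq {V : Type} [NormedAddCommGroup V] [NormedSpace ℂ V]
    [FiniteDimensional ℂ V] (x y : V →L[ℂ] V)
    (hxy : x * y = y * x) (hexp : NormedSpace.exp x = NormedSpace.exp y)
    (hkey : ∀ β γ : ℂ, β ∈ spectrum ℂ x → γ ∈ spectrum ℂ y →
      Complex.exp (β - γ) = 1 → β = γ) :
    x = y := by
  letI : NormedAlgebra ℚ (V →L[ℂ] V) := NormedAlgebra.restrictScalars ℚ ℂ _
  have hgy : NormedSpace.exp y * NormedSpace.exp (-y) = 1 := by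
    rw [← NormedSpace.exp_add_of_commute ((Commute.refl y).neg_right), add_neg_cancel,
      NormedSpace.exp_zero]
  have hexpD : NormedSpace.exp (x - y) = 1 := by
    have hcxy : Commute x (-y) := Commute.neg_right hxy
    rw [sub_eq_add_neg, NormedSpace.exp_add_of_commute hcxy, hexp]
    exact hgy
  have hspecD : ∀ (α : ℂ) (v : V), v ≠ 0 →
      (x - y) v = α • v → Complex.exp α = 1 → α = 0 := by
    intro α v hv0 hDv hexpα
    have hc' : (x - y) * x = x * (x - y) := by
      rw [sub_mul, mul_sub, hxy]
    have hcommEnd : (↑(x - y) : Module.End ℂ V) * (↑x : Module.End ℂ V)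
        = ↑x * ↑(x - y) := by
      apply LinearMap.ext
      intro a
      have := congrArg (fun z => z a) hc'
      simpa [Module.End.mul_apply, ContinuousLinearMap.mul_apply] using this
    obtain ⟨β, w, hw0, hDw, hxw⟩ :=
      exists_common_eigvec (↑(x - y)) (↑x) hcommEnd α v hv0 (by simpa using hDv)
    have hxw' : x w = β • w := by simpa using hxw
    have hDw' : x w - y w = α • w := by
      have : (x - y) w = α • w := by simpa using hDw
      rw [ContinuousLinearMap.sub_apply] at this
      exact this
    have hyw : y w = (β - α) • w := by
      rw [hxw'] at hDw'
      have h4 : β • w = α • w + y w := sub_eq_iff_eq_add.mp hDw'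
      rw [sub_smul, h4]
      abel
    have hβ : β ∈ spectrum ℂ x := mem_spectrum_of_eigvec hw0 hxw'
    have hβα : (β - α) ∈ spectrum ℂ y := mem_spectrum_of_eigvec hw0 hyw
    have := hkey β (β - α) hβ hβα (by
      rw [show β - (β - α) = α by ring]
      exact hexpα)
    have h5 : β - (β - α) = 0 := by rw [← this]; ring
    rw [show β - (β - α) = α by ring] at h5
    exact h5
  have hD0 : ∀ v, (x - y) v = 0 := fun v =>
    core (x - y) hspecD v (by rw [hexpD, ContinuousLinearMap.one_apply])
  apply ContinuousLinearMap.ext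
  intro v
  have := hD0 v
  rw [ContinuousLinearMap.sub_apply] at this
  exact sub_eq_zero.mp this

end LogUniqueAux

theorem matrix_log_unique_up_to_conjugation (n : ℕ)
    (G X Y L₁ L₂ : Matrix (Fin n) (Fin n) ℂ)
    (hX : NormedSpace.exp X = G) (hY : NormedSpace.exp Y = G)
    (hXG : X * G = G * X) (hYG : Y * G = G * Y)
    (hXL : X = (2 * Real.pi * I) • L₁) (hYL : Y = (2 * Real.pi * I) • L₂)
    (hL₁ : ∀ μ ∈ spectrum ℂ L₁, μ.re ∈ Set.Ico (0 : ℝ) 1)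
    (hL₂ : ∀ μ ∈ spectrum ℂ L₂, μ.re ∈ Set.Ico (0 : ℝ) 1) :
    ∃ U : Matrix (Fin n) (Fin n) ℂ, IsUnit U ∧ U * G = G * U ∧ X * U = U * Y := by
  classical
  refine ⟨1, isUnit_one, by rw [one_mul, mul_one], ?_⟩
  rw [mul_one, one_mul]
  have hc : ((2 * Real.pi * I : ℂ)) ≠ 0 := by
    simp [Real.pi_ne_zero, I_ne_zero, two_ne_zero]
  -- spectra of X and Y
  have hspecX : ∀ β ∈ spectrum ℂ X, ∃ b ∈ spectrum ℂ L₁, β = (2 * Real.pi * I) * b := by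
    intro β hβ
    rw [hXL] at hβ
    rw [show ((2 * Real.pi * I : ℂ) • L₁) = (Units.mk0 _ hc) • L₁ from by
      simp [Units.smul_def]] at hβ
    rw [spectrum.unit_smul_eq_smul] at hβ
    obtain ⟨b, hb, hbeq⟩ := hβ
    exact ⟨b, hb, by rw [← hbeq]; simp [Units.smul_def]⟩
  have hspecY : ∀ β ∈ spectrum ℂ Y, ∃ b ∈ spectrum ℂ L₂, β = (2 * Real.pi * I) * b := by
    intro β hβ
    rw [hYL] at hβ
    rw [show ((2 * Real.pi * I : ℂ) • L₂) = (Units.mk0 _ hc) • L₂ from by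
      simp [Units.smul_def]] at hβ
    rw [spectrum.unit_smul_eq_smul] at hβ
    obtain ⟨b, hb, hbeq⟩ := hβ
    exact ⟨b, hb, by rw [← hbeq]; simp [Units.smul_def]⟩
  have hkeyYY : ∀ β γ : ℂ, β ∈ spectrum ℂ Y → γ ∈ spectrum ℂ Y →
      Complex.exp (β - γ) = 1 → β = γ := by
    intro β γ hβ hγ hexp1
    obtain ⟨b₁, hb₁, h1⟩ := hspecY β hβ
    obtain ⟨b₂, hb₂, h2⟩ := hspecY γ hγ
    have hαeq : β - γ = (2 * Real.pi * I) * (b₁ - b₂) := by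
      rw [mul_sub, ← h1, ← h2]
    exact sub_eq_zero.mp (key_arith (hL₂ b₁ hb₁) (hL₂ b₂ hb₂) hαeq hexp1)
  -- Step 1: X and Y commute, working in the matrix Banach algebra
  have hXY : X * Y = Y * X := by
    letI : SeminormedRing (Matrix (Fin n) (Fin n) ℂ) := Matrix.linftyOpSemiNormedRing
    letI : NormedRing (Matrix (Fin n) (Fin n) ℂ) := Matrix.linftyOpNormedRing
    letI : NormedAlgebra ℂ (Matrix (Fin n) (Fin n) ℂ) := Matrix.linftyOpNormedAlgebra
    have hY' : NormedSpace.exp Y = G := hY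
    have hxg : X * NormedSpace.exp Y = NormedSpace.exp Y * X := by
      rw [hY']; exact hXG
    exact commute_of_commute_exp X Y hxg hkeyYY
  -- Step 2: X = Y, working with continuous linear maps on Fin n → ℂ
  set Φ := matCLM n with hΦ
  have hxy : Φ X * Φ Y = Φ Y * Φ X := by
    rw [← map_mul, ← map_mul, hXY]
  have hexpeq : NormedSpace.exp (Φ X) = NormedSpace.exp (Φ Y) := by
    rw [← matCLM_exp, ← matCLM_exp, hX, hY]
  have hkeyXY : ∀ β γ : ℂ, β ∈ spectrum ℂ (Φ X) → γ ∈ spectrum ℂ (Φ Y) →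
      Complex.exp (β - γ) = 1 → β = γ := by
    intro β γ hβ hγ hexp1
    rw [AlgEquiv.spectrum_eq] at hβ hγ
    obtain ⟨b₁, hb₁, h1⟩ := hspecX β hβ
    obtain ⟨b₂, hb₂, h2⟩ := hspecY γ hγ
    have hαeq : β - γ = (2 * Real.pi * I) * (b₁ - b₂) := by
      rw [mul_sub, ← h1, ← h2]
    exact sub_eq_zero.mp (key_arith (hL₁ b₁ hb₁) (hL₂ b₂ hb₂) hαeq hexp1)
  have hxyeq : Φ X = Φ Y := eq_of_exp_eq (Φ X) (Φ Y) hxy hexpeq hkeyXY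
  have hXYeq : X = Y := Φ.injective hxyeq
  rw [hXYeq]
end
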